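/- For any permutation σ of [n], the number of cycles of σ is congruent modulo 2 to fix(σ) + cpeak(σ) + ucross(σ) + lcross(σ), where fix is the number of fixed points, cpeak the number of cycle peaks, and ucross, lcross the numbers of upper and lower crossings. -/

import Mathlib

open Finset

def fixCt {n : ℕ} (σ : Equiv.Perm (Fin n)) : ℕ :=
  (univ.filter fun i => σ i = i).card

def cpeakCt {n : ℕ} (σ : Equiv.Perm (Fin n)) : ℕ :=
  (univ.filter fun i => σ⁻¹ i < i ∧ σ i < i).card

def cvalCt {n : ℕ} (σ : Equiv.Perm (Fin n)) : ℕ :=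
  (univ.filter fun i => i < σ⁻¹ i ∧ i < σ i).card

def cdriseCt {n : ℕ} (σ : Equiv.Perm (Fin n)) : ℕ :=
  (univ.filter fun i => σ⁻¹ i < i ∧ i < σ i).card

def cdfallCt {n : ℕ} (σ : Equiv.Perm (Fin n)) : ℕ :=
  (univ.filter fun i => i < σ⁻¹ i ∧ σ i < i).card

def ucrossCt {n : ℕ} (σ : Equiv.Perm (Fin n)) : ℕ :=
  (univ.filter fun p : Fin n × Fin n × Fin n × Fin n =>
    p.1 < p.2.1 ∧ p.2.1 < p.2.2.1 ∧ p.2.2.1 < p.2.2.2 ∧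
    p.2.2.1 = σ p.1 ∧ p.2.2.2 = σ p.2.1).card

def lcrossCt {n : ℕ} (σ : Equiv.Perm (Fin n)) : ℕ :=
  (univ.filter fun p : Fin n × Fin n × Fin n × Fin n =>
    p.1 < p.2.1 ∧ p.2.1 < p.2.2.1 ∧ p.2.2.1 < p.2.2.2 ∧
    p.1 = σ p.2.2.1 ∧ p.2.1 = σ p.2.2.2).card

def unestCt {n : ℕ} (σ : Equiv.Perm (Fin n)) : ℕ :=
  (univ.filter fun p : Fin n × Fin n × Fin n × Fin n =>
    p.1 < p.2.1 ∧ p.2.1 < p.2.2.1 ∧ p.2.2.1 < p.2.2.2 ∧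
    p.2.2.2 = σ p.1 ∧ p.2.2.1 = σ p.2.1).card

def lnestCt {n : ℕ} (σ : Equiv.Perm (Fin n)) : ℕ :=
  (univ.filter fun p : Fin n × Fin n × Fin n × Fin n =>
    p.1 < p.2.1 ∧ p.2.1 < p.2.2.1 ∧ p.2.2.1 < p.2.2.2 ∧
    p.1 = σ p.2.2.2 ∧ p.2.1 = σ p.2.2.1).card

def psnestCt {n : ℕ} (σ : Equiv.Perm (Fin n)) : ℕ :=
  (univ.filter fun p : Fin n × Fin n × Fin n =>
    p.1 < p.2.1 ∧ p.2.1 < p.2.2 ∧ σ p.2.1 = p.2.1 ∧ σ p.1 = p.2.2).card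

def invCt {n : ℕ} (σ : Equiv.Perm (Fin n)) : ℕ :=
  (univ.filter fun p : Fin n × Fin n => p.1 < p.2 ∧ σ p.2 < σ p.1).card

/-- Number of cycles of a permutation, counting fixed points as cycles. -/
def cycCt {n : ℕ} (σ : Equiv.Perm (Fin n)) : ℕ :=
  σ.cycleType.card + fixCt σ

def ucrossAt {n : ℕ} (σ : Equiv.Perm (Fin n)) (j : Fin n) : ℕ :=
  (univ.filter fun p : Fin n × Fin n × Fin n =>
    p.1 < j ∧ j < p.2.1 ∧ p.2.1 < p.2.2 ∧ p.2.1 = σ p.1 ∧ p.2.2 = σ j).card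

def unestAt {n : ℕ} (σ : Equiv.Perm (Fin n)) (j : Fin n) : ℕ :=
  (univ.filter fun p : Fin n × Fin n × Fin n =>
    p.1 < j ∧ j < p.2.1 ∧ p.2.1 < p.2.2 ∧ p.2.1 = σ j ∧ p.2.2 = σ p.1).card

def lcrossAt {n : ℕ} (σ : Equiv.Perm (Fin n)) (k : Fin n) : ℕ :=
  (univ.filter fun p : Fin n × Fin n × Fin n =>
    p.1 < p.2.1 ∧ p.2.1 < k ∧ k < p.2.2 ∧ p.1 = σ k ∧ p.2.1 = σ p.2.2).card

def lnestAt {n : ℕ} (σ : Equiv.Perm (Fin n)) (k : Fin n) : ℕ :=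
  (univ.filter fun p : Fin n × Fin n × Fin n =>
    p.1 < p.2.1 ∧ p.2.1 < k ∧ k < p.2.2 ∧ p.1 = σ p.2.2 ∧ p.2.1 = σ k).card

/-- `i` is a record (left-to-right maximum) of `σ`. -/
def IsRecord {n : ℕ} (σ : Equiv.Perm (Fin n)) (i : Fin n) : Prop :=
  ∀ j, j < i → σ j < σ i

/-- `i` is an antirecord (right-to-left minimum) of `σ`. -/
def IsAntirecord {n : ℕ} (σ : Equiv.Perm (Fin n)) (i : Fin n) : Prop :=
  ∀ j, i < j → σ i < σ j

def ujoinCt {n : ℕ} (σ : Equiv.Perm (Fin n)) : ℕ :=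
  (univ.filter fun p : Fin n × Fin n × Fin n =>
    p.1 < p.2.1 ∧ p.2.1 < p.2.2 ∧ p.2.1 = σ p.1 ∧ p.2.2 = σ p.2.1).card

def ljoinCt {n : ℕ} (σ : Equiv.Perm (Fin n)) : ℕ :=
  (univ.filter fun p : Fin n × Fin n × Fin n =>
    p.1 < p.2.1 ∧ p.2.1 < p.2.2 ∧ p.1 = σ p.2.1 ∧ p.2.1 = σ p.2.2).card

section Aux

variable {n : ℕ}

@[simp] theorem Equiv.Perm.apply_inv_self {α : Type*} (σ : Equiv.Perm α) (x : α) :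
    σ (σ⁻¹ x) = x := σ.apply_symm_apply x

@[simp] theorem Equiv.Perm.inv_apply_self {α : Type*} (σ : Equiv.Perm α) (x : α) :
    σ⁻¹ (σ x) = x := σ.symm_apply_apply x

def ucP (σ : Equiv.Perm (Fin n)) : ℕ :=
  (univ.filter fun p : Fin n × Fin n => p.1 < p.2 ∧ p.2 < σ p.1 ∧ σ p.1 < σ p.2).card
def lcP (σ : Equiv.Perm (Fin n)) : ℕ :=
  (univ.filter fun p : Fin n × Fin n => σ p.1 < σ p.2 ∧ σ p.2 < p.1 ∧ p.1 < p.2).card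

lemma card_split {α : Type*} [Fintype α] (P Q : α → Prop)
    [DecidablePred P] [DecidablePred Q] :
    (univ.filter P).card = (univ.filter fun x => P x ∧ Q x).card
      + (univ.filter fun x => P x ∧ ¬ Q x).card := by
  rw [← Finset.filter_filter, ← Finset.filter_filter,
    Finset.card_filter_add_card_filter_not]

lemma card_filter_eq_pt (Q : Fin n → Prop) [DecidablePred Q] (c : Fin n) :
    (univ.filter fun x => Q x ∧ x = c).card = if Q c then 1 else 0 := by
  split_ifs with h
  · rw [Finset.card_eq_one]
    refine ⟨c, ?_⟩
    ext x
    simp only [mem_filter, mem_univ, true_and, mem_singleton]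
    constructor
    · rintro ⟨_, rfl⟩; rfl
    · rintro rfl; exact ⟨h, rfl⟩
  · rw [Finset.card_eq_zero]
    ext x
    simp only [mem_filter, mem_univ, true_and, notMem_empty, iff_false]
    rintro ⟨hq, rfl⟩; exact h hq

lemma card_pair_snd (Q : Fin n → Fin n → Prop) [∀ x y, Decidable (Q x y)] (c : Fin n) :
    (univ.filter fun p : Fin n × Fin n => Q p.1 p.2 ∧ p.2 = c).card
      = (univ.filter fun x => Q x c).card := by
  apply Finset.card_nbij' (fun p => p.1) (fun x => (x, c))
  · rintro ⟨x,y⟩ h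
    simp only [Finset.mem_coe, mem_filter, mem_univ, true_and] at h ⊢
    obtain ⟨hq, rfl⟩ := h; exact hq
  · intro x h
    simp only [Finset.mem_coe, mem_filter, mem_univ, true_and] at h ⊢
    exact ⟨h, trivial⟩
  · rintro ⟨x,y⟩ h
    simp only [Finset.mem_coe, mem_filter, mem_univ, true_and] at h
    obtain ⟨_, rfl⟩ := h; rfl
  · intro x _; rfl

lemma card_pair_fst (Q : Fin n → Fin n → Prop) [∀ x y, Decidable (Q x y)] (c : Fin n) :
    (univ.filter fun p : Fin n × Fin n => Q p.1 p.2 ∧ p.1 = c).card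
      = (univ.filter fun y => Q c y).card := by
  apply Finset.card_nbij' (fun p => p.2) (fun y => (c, y))
  · rintro ⟨x,y⟩ h
    simp only [Finset.mem_coe, mem_filter, mem_univ, true_and] at h ⊢
    obtain ⟨hq, rfl⟩ := h; exact hq
  · intro y h
    simp only [Finset.mem_coe, mem_filter, mem_univ, true_and] at h ⊢
    exact ⟨h, trivial⟩
  · rintro ⟨x,y⟩ h
    simp only [Finset.mem_coe, mem_filter, mem_univ, true_and] at h
    obtain ⟨_, rfl⟩ := h; rfl
  · intro y _; rfl

lemma balance (σ : Equiv.Perm (Fin n)) (b : Fin n) :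
    (univ.filter fun x => x ≤ b ∧ b < σ x).card
      = (univ.filter fun x => b < x ∧ σ x ≤ b).card := by
  have h1 : (univ.filter fun x : Fin n => b < σ x).card
      = (univ.filter fun x : Fin n => b < x).card := by
    apply Finset.card_nbij' (fun x => σ x) (fun y => σ⁻¹ y)
    · intro x hx; simp only [Finset.mem_coe, mem_filter, mem_univ, true_and] at hx ⊢; exact hx
    · intro y hy; simp only [Finset.mem_coe, mem_filter, mem_univ, true_and,
        Equiv.Perm.apply_inv_self] at hy ⊢
      exact hy
    · intro x _; simp
    · intro y _; simp
  have h2 := card_split (fun x : Fin n => b < σ x) (fun x => x ≤ b)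
  have h3 := card_split (fun x : Fin n => b < x) (fun x => b < σ x)
  have e1 : (univ.filter fun x : Fin n => b < σ x ∧ x ≤ b)
      = (univ.filter fun x => x ≤ b ∧ b < σ x) := by
    ext x; simp only [Finset.mem_filter]; try tauto
  have e2 : (univ.filter fun x : Fin n => b < σ x ∧ ¬ x ≤ b)
      = (univ.filter fun x => b < x ∧ b < σ x) := by
    ext x; simp only [Finset.mem_filter, not_le]; try tauto
  have e3 : (univ.filter fun x : Fin n => b < x ∧ ¬ b < σ x)
      = (univ.filter fun x => b < x ∧ σ x ≤ b) := by
    ext x; simp only [Finset.mem_filter, not_lt]; try tauto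
  rw [e1, e2] at h2
  rw [e3] at h3
  omega

set_option maxHeartbeats 1000000 in
lemma stepCore (σ : Equiv.Perm (Fin n)) (m : Fin n) (hm : σ m ≠ m)
    (hmax : ∀ x, σ x ≠ x → x ≤ m) (hab : σ⁻¹ m < σ m) :
    (fixCt (σ * Equiv.swap (σ⁻¹ m) m) + cpeakCt (σ * Equiv.swap (σ⁻¹ m) m)
       + ucP (σ * Equiv.swap (σ⁻¹ m) m) + lcP (σ * Equiv.swap (σ⁻¹ m) m)) % 2
    = (1 + fixCt σ + cpeakCt σ + ucP σ + lcP σ) % 2 := by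
  set a := σ⁻¹ m with ha_def
  set b := σ m with hb_def
  set τ := σ * Equiv.swap a m with hτ_def
  have hσa : σ a = m := by rw [ha_def]; exact σ.apply_inv_self m
  have hinvb : σ⁻¹ b = m := by rw [hb_def]; exact σ.inv_apply_self m
  have ham : a ≠ m := by intro h; rw [h] at hσa; exact hm hσa
  have hbm : b ≠ m := hm
  have hnf : ∀ x : Fin n, σ x ≠ x → x ≤ m ∧ σ x ≤ m := by
    intro x hx
    exact ⟨hmax x hx, hmax (σ x) fun h => hx (σ.injective h)⟩
  have ha_lt : a < m := by
    have h1 : σ a ≠ a := by rw [hσa]; exact fun h => ham h.symm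
    have := hmax a h1; omega
  have hσbb : σ b ≠ b := by
    intro h
    rw [hb_def] at h
    exact hm (σ.injective h)
  have hb_lt : b < m := by
    have := hmax b hσbb; omega
  have hvm : ∀ x, σ x = m → x = a := by
    intro x h
    exact σ.injective (h.trans hσa.symm)
  have hvb : ∀ x, σ x = b → x = m := by
    intro x h
    exact σ.injective (h.trans hb_def)
  have hab' : a < b := hab
  have hτa : τ a = b := by
    rw [hτ_def, hb_def]
    simp [Equiv.Perm.mul_apply, Equiv.swap_apply_left]
  have hτm : τ m = m := by
    rw [hτ_def]
    simp only [Equiv.Perm.mul_apply, Equiv.swap_apply_right]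
    exact hσa
  have hτx : ∀ x, x ≠ a → x ≠ m → τ x = σ x := by
    intro x h1 h2
    rw [hτ_def]
    simp only [Equiv.Perm.mul_apply, Equiv.swap_apply_of_ne_of_ne h1 h2]
  have hτinv : ∀ x, τ⁻¹ x = Equiv.swap a m (σ⁻¹ x) := by
    intro x
    rw [hτ_def]
    simp [mul_inv_rev, Equiv.Perm.mul_apply]
  have hτib : τ⁻¹ b = a := by rw [hτinv, hinvb, Equiv.swap_apply_right]
  have hτim : τ⁻¹ m = m := by rw [hτinv, ← ha_def, Equiv.swap_apply_left]
  have hτix : ∀ x, x ≠ b → x ≠ m → τ⁻¹ x = σ⁻¹ x := by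
    intro x h1 h2
    rw [hτinv]
    apply Equiv.swap_apply_of_ne_of_ne
    · intro h
      apply h2
      have : σ⁻¹ x = σ⁻¹ m := by rw [← ha_def]; exact h
      exact σ⁻¹.injective this
    · intro h
      apply h1
      have : σ⁻¹ x = σ⁻¹ b := by rw [hinvb]; exact h
      exact σ⁻¹.injective this
  -- (1) fixed points
  have hfix : fixCt τ = fixCt σ + 1 := by
    have hset : (univ.filter fun x : Fin n => τ x = x)
        = insert m (univ.filter fun x => σ x = x) := by
      ext x
      simp only [mem_filter, mem_univ, true_and, mem_insert]
      constructor
      · intro h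
        by_cases hxm : x = m
        · exact Or.inl hxm
        · by_cases hxa : x = a
          · subst hxa; rw [hτa] at h; exact absurd h (by omega)
          · right; rwa [hτx x hxa hxm] at h
      · rintro (rfl | h)
        · exact hτm
        · have hxm : x ≠ m := by intro e; subst e; exact hm h
          have hxa : x ≠ a := by intro e; subst e; rw [hσa] at h; exact ham h.symm
          rw [hτx x hxa hxm]; exact h
    unfold fixCt
    rw [hset, Finset.card_insert_of_notMem (by simp [hm]; exact hm)]
  -- (2) cycle peaks
  have hcpk : cpeakCt σ + (if σ b < b then 1 else 0) = cpeakCt τ + 1 := by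
    have s1 := card_split (fun x : Fin n => σ⁻¹ x < x ∧ σ x < x) (fun x => x = m)
    have s2 := card_split (fun x : Fin n => τ⁻¹ x < x ∧ τ x < x) (fun x => x = b)
    have c1 : (univ.filter fun x : Fin n => (σ⁻¹ x < x ∧ σ x < x) ∧ x = m).card = 1 := by
      rw [card_filter_eq_pt, if_pos]
      exact ⟨by rw [← ha_def]; omega, by rw [← hb_def]; omega⟩
    have c2 : (univ.filter fun x : Fin n => (τ⁻¹ x < x ∧ τ x < x) ∧ x = b).card
        = (if σ b < b then 1 else 0) := by
      rw [card_filter_eq_pt]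
      have hτb : τ b = σ b := hτx b (by omega) hbm
      rw [hτib, hτb]
      simp [hab']
    have cmid : (univ.filter fun x : Fin n => (σ⁻¹ x < x ∧ σ x < x) ∧ ¬ x = m)
        = (univ.filter fun x : Fin n => (τ⁻¹ x < x ∧ τ x < x) ∧ ¬ x = b) := by
      ext x
      simp only [mem_filter, mem_univ, true_and]
      constructor
      · rintro ⟨⟨h1, h2⟩, hxm⟩
        have hxa : x ≠ a := by intro e; subst e; rw [hσa] at h2; omega
        have hxb : x ≠ b := by intro e; subst e; rw [hinvb] at h1; omega
        rw [hτix x hxb hxm, hτx x hxa hxm]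
        exact ⟨⟨h1, h2⟩, hxb⟩
      · rintro ⟨⟨h1, h2⟩, hxb⟩
        have hxm : x ≠ m := by intro e; subst e; rw [hτim] at h1; omega
        have hxa : x ≠ a := by intro e; subst e; rw [hτa] at h2; omega
        rw [hτix x hxb hxm] at h1
        rw [hτx x hxa hxm] at h2
        exact ⟨⟨h1, h2⟩, hxm⟩
    unfold cpeakCt
    rw [s1, s2, c1, c2, cmid]
    omega
  -- (3) upper crossings
  have huc : ucP σ
        + (univ.filter fun i : Fin n => i < a ∧ a < σ i ∧ σ i < b).card
        + (univ.filter fun j : Fin n => a < j ∧ j < b ∧ b < σ j).card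
      = ucP τ + (univ.filter fun i : Fin n => i < a ∧ a < σ i).card := by
    have s1 := card_split (fun p : Fin n × Fin n =>
      p.1 < p.2 ∧ p.2 < σ p.1 ∧ σ p.1 < σ p.2) (fun p => p.2 = a)
    have hA1 : (univ.filter fun p : Fin n × Fin n =>
        (p.1 < p.2 ∧ p.2 < σ p.1 ∧ σ p.1 < σ p.2) ∧ p.2 = a).card
        = (univ.filter fun i : Fin n => i < a ∧ a < σ i).card := by
      rw [card_pair_snd (fun x y => x < y ∧ y < σ x ∧ σ x < σ y) a]
      congr 1
      ext x
      simp only [mem_filter, mem_univ, true_and]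
      constructor
      · rintro ⟨h1, h2, _⟩; exact ⟨h1, h2⟩
      · rintro ⟨h1, h2⟩
        refine ⟨h1, h2, ?_⟩
        rw [hσa]
        have hx : σ x ≠ x := by omega
        have h3 := (hnf x hx).2
        have h4 : σ x ≠ m := fun e => by have := hvm x e; omega
        omega
    have hrest : (univ.filter fun p : Fin n × Fin n =>
          (p.1 < p.2 ∧ p.2 < σ p.1 ∧ σ p.1 < σ p.2) ∧ ¬ p.2 = a)
        = (univ.filter fun p : Fin n × Fin n =>
          ((p.1 < p.2 ∧ p.2 < τ p.1 ∧ τ p.1 < τ p.2) ∧ ¬ p.1 = a) ∧ ¬ p.2 = a) := by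
      ext ⟨x, y⟩
      simp only [mem_filter, mem_univ, true_and]
      constructor
      · rintro ⟨⟨h1, h2, h3⟩, h4⟩
        have hya : y ≠ a := h4
        have hxa : x ≠ a := by
          intro e; subst e
          rw [hσa] at h2 h3
          have hy : σ y ≠ y := by omega
          have := (hnf y hy).2; omega
        have hxm : x ≠ m := by
          intro e; subst e
          rw [← hb_def] at h2
          omega
        have hym : y ≠ m := by
          intro e; subst e
          rw [← hb_def] at h3
          omega
        rw [hτx x hxa hxm, hτx y hya hym]
        exact ⟨⟨⟨h1, h2, h3⟩, hxa⟩, hya⟩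
      · rintro ⟨⟨⟨h1, h2, h3⟩, h5⟩, h4⟩
        have hxm : x ≠ m := by
          intro e; subst e
          rw [hτm] at h2
          omega
        have hym : y ≠ m := by
          intro e
          rw [e] at h2 h3
          rw [hτm] at h3
          omega
        rw [hτx x h5 hxm] at h2 h3
        rw [hτx y h4 hym] at h3
        exact ⟨⟨h1, h2, h3⟩, h4⟩
    have s2 := card_split (fun p : Fin n × Fin n =>
      p.1 < p.2 ∧ p.2 < τ p.1 ∧ τ p.1 < τ p.2) (fun p => p.1 = a)
    have s3 := card_split (fun p : Fin n × Fin n =>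
      (p.1 < p.2 ∧ p.2 < τ p.1 ∧ τ p.1 < τ p.2) ∧ ¬ p.1 = a) (fun p => p.2 = a)
    have hA2 : (univ.filter fun p : Fin n × Fin n =>
        (p.1 < p.2 ∧ p.2 < τ p.1 ∧ τ p.1 < τ p.2) ∧ p.1 = a).card
        = (univ.filter fun j : Fin n => a < j ∧ j < b ∧ b < σ j).card := by
      rw [card_pair_fst (fun x y => x < y ∧ y < τ x ∧ τ x < τ y) a]
      congr 1
      ext y
      simp only [mem_filter, mem_univ, true_and]
      rw [hτa]
      constructor
      · rintro ⟨h1, h2, h3⟩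
        have hya : y ≠ a := by omega
        have hym : y ≠ m := by omega
        rw [hτx y hya hym] at h3
        exact ⟨h1, h2, h3⟩
      · rintro ⟨h1, h2, h3⟩
        have hya : y ≠ a := by omega
        have hym : y ≠ m := by omega
        rw [hτx y hya hym]
        exact ⟨h1, h2, h3⟩
    have hA3 : (univ.filter fun p : Fin n × Fin n =>
        ((p.1 < p.2 ∧ p.2 < τ p.1 ∧ τ p.1 < τ p.2) ∧ ¬ p.1 = a) ∧ p.2 = a).card
        = (univ.filter fun i : Fin n => i < a ∧ a < σ i ∧ σ i < b).card := by
      rw [card_pair_snd (fun x y => (x < y ∧ y < τ x ∧ τ x < τ y) ∧ ¬ x = a) a]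
      congr 1
      ext x
      simp only [mem_filter, mem_univ, true_and]
      rw [hτa]
      constructor
      · rintro ⟨⟨h1, h2, h3⟩, h5⟩
        have hxm : x ≠ m := by omega
        rw [hτx x h5 hxm] at h2 h3
        exact ⟨h1, h2, h3⟩
      · rintro ⟨h1, h2, h3⟩
        have hxa : x ≠ a := by omega
        have hxm : x ≠ m := by omega
        rw [hτx x hxa hxm]
        exact ⟨⟨h1, h2, h3⟩, hxa⟩
    unfold ucP
    rw [s1, hA1, hrest, s2, hA2, s3, hA3]
    omega
  -- (4) lower crossings
  have hlc : lcP σ = lcP τ + (univ.filter fun k : Fin n => σ k < b ∧ b < k).card := by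
    have s1 := card_split (fun p : Fin n × Fin n =>
      σ p.1 < σ p.2 ∧ σ p.2 < p.1 ∧ p.1 < p.2) (fun p => p.2 = m)
    have hL1 : (univ.filter fun p : Fin n × Fin n =>
        (σ p.1 < σ p.2 ∧ σ p.2 < p.1 ∧ p.1 < p.2) ∧ p.2 = m).card
        = (univ.filter fun k : Fin n => σ k < b ∧ b < k).card := by
      rw [card_pair_snd (fun x y => σ x < σ y ∧ σ y < x ∧ x < y) m]
      congr 1
      ext k
      simp only [mem_filter, mem_univ, true_and]
      rw [← hb_def]
      constructor
      · rintro ⟨h1, h2, _⟩; exact ⟨h1, h2⟩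
      · rintro ⟨h1, h2⟩
        have hk : σ k ≠ k := by omega
        have h3 := (hnf k hk).1
        have hkm : k ≠ m := by intro e; subst e; omega
        exact ⟨h1, h2, by omega⟩
    have hLrest : (univ.filter fun p : Fin n × Fin n =>
          (σ p.1 < σ p.2 ∧ σ p.2 < p.1 ∧ p.1 < p.2) ∧ ¬ p.2 = m)
        = (univ.filter fun p : Fin n × Fin n =>
          τ p.1 < τ p.2 ∧ τ p.2 < p.1 ∧ p.1 < p.2) := by
      ext ⟨x, y⟩
      simp only [mem_filter, mem_univ, true_and]
      constructor
      · rintro ⟨⟨h1, h2, h3⟩, h4⟩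
        have hy_nf : σ y ≠ y := by omega
        have hyb := (hnf y hy_nf).2
        have hyle := (hnf y hy_nf).1
        have hym : y ≠ m := h4
        have hxm : x ≠ m := by intro e; subst e; omega
        have hxa : x ≠ a := by
          intro e; subst e
          rw [hσa] at h1
          omega
        have hya : y ≠ a := by
          intro e; subst e
          rw [hσa] at h2
          omega
        rw [hτx x hxa hxm, hτx y hya hym]
        exact ⟨h1, h2, h3⟩
      · rintro ⟨h1, h2, h3⟩
        have hxm : x ≠ m := by
          intro e; subst e
          rw [hτm] at h1
          omega
        have hym : y ≠ m := by
          intro e; subst e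
          rw [hτm] at h1 h2
          omega
        have hxa : x ≠ a := by
          intro e; subst e
          rw [hτa] at h1
          omega
        have hya : y ≠ a := by
          intro e; subst e
          rw [hτa] at h1 h2
          omega
        rw [hτx x hxa hxm] at h1
        rw [hτx y hya hym] at h1 h2
        exact ⟨⟨h1, h2, h3⟩, hym⟩
    unfold lcP
    rw [s1, hL1, hLrest]
    omega
  -- (5) split of S1
  have hS : (univ.filter fun i : Fin n => i < a ∧ a < σ i).card
      = (univ.filter fun i : Fin n => i < a ∧ a < σ i ∧ σ i < b).card
        + (univ.filter fun i : Fin n => i < a ∧ b < σ i).card := by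
    have s := card_split (fun i : Fin n => i < a ∧ a < σ i) (fun i => σ i < b)
    have e1 : (univ.filter fun i : Fin n => (i < a ∧ a < σ i) ∧ σ i < b)
        = (univ.filter fun i : Fin n => i < a ∧ a < σ i ∧ σ i < b) := by
      ext i; simp only [mem_filter, mem_univ, true_and]; try tauto
    have e2 : (univ.filter fun i : Fin n => (i < a ∧ a < σ i) ∧ ¬ σ i < b)
        = (univ.filter fun i : Fin n => i < a ∧ b < σ i) := by
      ext i
      simp only [mem_filter, mem_univ, true_and, not_lt]
      constructor
      · rintro ⟨⟨h1, h2⟩, h3⟩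
        have h4 : σ i ≠ b := by intro e; have := hvb i e; omega
        exact ⟨h1, by omega⟩
      · rintro ⟨h1, h2⟩
        exact ⟨⟨h1, by omega⟩, by omega⟩
    rw [e1, e2] at s
    exact s
  -- (6) balance at b
  have hU : (univ.filter fun i : Fin n => i < a ∧ b < σ i).card + 1
        + (univ.filter fun j : Fin n => a < j ∧ j < b ∧ b < σ j).card
        + (if b < σ b then 1 else 0)
      = (univ.filter fun k : Fin n => σ k < b ∧ b < k).card + 1 := by
    have hbal := balance σ b
    have l1 := card_split (fun x : Fin n => x ≤ b ∧ b < σ x) (fun x => x < a)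
    have l2 := card_split (fun x : Fin n => (x ≤ b ∧ b < σ x) ∧ ¬ x < a) (fun x => x = a)
    have l3 := card_split (fun x : Fin n => ((x ≤ b ∧ b < σ x) ∧ ¬ x < a) ∧ ¬ x = a)
      (fun x => x = b)
    have e1 : (univ.filter fun x : Fin n => (x ≤ b ∧ b < σ x) ∧ x < a)
        = (univ.filter fun x : Fin n => x < a ∧ b < σ x) := by
      ext x
      simp only [mem_filter, mem_univ, true_and]
      constructor
      · rintro ⟨⟨h1, h2⟩, h3⟩; exact ⟨h3, h2⟩
      · rintro ⟨h1, h2⟩; exact ⟨⟨by omega, h2⟩, h1⟩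
    have e2 : (univ.filter fun x : Fin n => ((x ≤ b ∧ b < σ x) ∧ ¬ x < a) ∧ x = a).card
        = 1 := by
      rw [card_filter_eq_pt, if_pos]
      refine ⟨⟨by omega, ?_⟩, by omega⟩
      rw [hσa]; omega
    have e3 : (univ.filter fun x : Fin n =>
        (((x ≤ b ∧ b < σ x) ∧ ¬ x < a) ∧ ¬ x = a) ∧ x = b).card
        = (if b < σ b then 1 else 0) := by
      rw [card_filter_eq_pt]
      by_cases h : b < σ b
      · rw [if_pos, if_pos h]
        exact ⟨⟨⟨by omega, h⟩, by omega⟩, by omega⟩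
      · rw [if_neg, if_neg h]
        intro hc
        exact h hc.1.1.2
    have e4 : (univ.filter fun x : Fin n =>
        ((((x ≤ b ∧ b < σ x) ∧ ¬ x < a) ∧ ¬ x = a) ∧ ¬ x = b))
        = (univ.filter fun j : Fin n => a < j ∧ j < b ∧ b < σ j) := by
      ext x
      simp only [mem_filter, mem_univ, true_and]
      constructor
      · rintro ⟨⟨⟨⟨h1, h2⟩, h3⟩, h4⟩, h5⟩
        exact ⟨by omega, by omega, h2⟩
      · rintro ⟨h1, h2, h3⟩
        exact ⟨⟨⟨⟨by omega, h3⟩, by omega⟩, by omega⟩, by omega⟩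
    have r1 := card_split (fun x : Fin n => b < x ∧ σ x ≤ b) (fun x => σ x < b)
    have f1 : (univ.filter fun x : Fin n => (b < x ∧ σ x ≤ b) ∧ σ x < b)
        = (univ.filter fun k : Fin n => σ k < b ∧ b < k) := by
      ext x
      simp only [mem_filter, mem_univ, true_and]
      constructor
      · rintro ⟨⟨h1, h2⟩, h3⟩; exact ⟨h3, h1⟩
      · rintro ⟨h1, h2⟩; exact ⟨⟨h2, by omega⟩, h1⟩
    have f2 : (univ.filter fun x : Fin n => (b < x ∧ σ x ≤ b) ∧ ¬ σ x < b).card = 1 := by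
      have hset : (univ.filter fun x : Fin n => (b < x ∧ σ x ≤ b) ∧ ¬ σ x < b) = {m} := by
        ext x
        simp only [mem_filter, mem_univ, true_and, mem_singleton]
        constructor
        · rintro ⟨⟨h1, h2⟩, h3⟩
          have : σ x = b := by omega
          exact hvb x this
        · intro e
          rw [e]
          have hσm : σ m = b := hb_def.symm
          rw [hσm]
          exact ⟨⟨hb_lt, le_refl _⟩, by omega⟩
      rw [hset, Finset.card_singleton]
    rw [e1] at l1
    rw [e2] at l2
    rw [e3, e4] at l3
    rw [f1, f2] at r1
    omega
  have hBB : (if σ b < b then 1 else 0) + (if b < σ b then 1 else 0) = 1 := by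
    by_cases h : σ b < b
    · rw [if_pos h, if_neg (by omega)]
    · have h2 : b < σ b := by omega
      rw [if_neg h, if_pos h2]
  omega
set_option maxHeartbeats 1000000 in
lemma stepEq (σ : Equiv.Perm (Fin n)) (m : Fin n) (hm : σ m ≠ m)
    (hmax : ∀ x, σ x ≠ x → x ≤ m) (heq : σ⁻¹ m = σ m) :
    (fixCt (σ * Equiv.swap (σ⁻¹ m) m) + cpeakCt (σ * Equiv.swap (σ⁻¹ m) m)
       + ucP (σ * Equiv.swap (σ⁻¹ m) m) + lcP (σ * Equiv.swap (σ⁻¹ m) m)) % 2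
    = (1 + fixCt σ + cpeakCt σ + ucP σ + lcP σ) % 2 := by
  set a := σ⁻¹ m with ha_def
  set τ := σ * Equiv.swap a m with hτ_def
  have hσa : σ a = m := by rw [ha_def]; exact σ.apply_inv_self m
  have hσm : σ m = a := heq.symm
  have ham : a ≠ m := by intro h; rw [h] at hσa; exact hm hσa
  have hnf : ∀ x : Fin n, σ x ≠ x → x ≤ m ∧ σ x ≤ m := by
    intro x hx
    exact ⟨hmax x hx, hmax (σ x) fun h => hx (σ.injective h)⟩
  have ha_lt : a < m := by
    have h1 : σ a ≠ a := by rw [hσa]; exact fun h => ham h.symm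
    have := hmax a h1; omega
  have hvm : ∀ x, σ x = m → x = a := by
    intro x h
    exact σ.injective (h.trans hσa.symm)
  have hva : ∀ x, σ x = a → x = m := by
    intro x h
    exact σ.injective (h.trans hσm.symm)
  have hτa : τ a = a := by
    rw [hτ_def]
    simp only [Equiv.Perm.mul_apply, Equiv.swap_apply_left]
    exact hσm
  have hτm : τ m = m := by
    rw [hτ_def]
    simp only [Equiv.Perm.mul_apply, Equiv.swap_apply_right]
    exact hσa
  have hτx : ∀ x, x ≠ a → x ≠ m → τ x = σ x := by
    intro x h1 h2
    rw [hτ_def]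
    simp only [Equiv.Perm.mul_apply, Equiv.swap_apply_of_ne_of_ne h1 h2]
  have hτinv : ∀ x, τ⁻¹ x = Equiv.swap a m (σ⁻¹ x) := by
    intro x
    rw [hτ_def]
    simp [mul_inv_rev, Equiv.Perm.mul_apply]
  have hτia : τ⁻¹ a = a := by
    have h1 : σ⁻¹ a = m := by
      have := congrArg (⇑σ⁻¹) hσm
      rw [σ.inv_apply_self] at this
      exact this.symm
    rw [hτinv, h1, Equiv.swap_apply_right]
  have hτim : τ⁻¹ m = m := by rw [hτinv, ← ha_def, Equiv.swap_apply_left]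
  have hτix : ∀ x, x ≠ a → x ≠ m → τ⁻¹ x = σ⁻¹ x := by
    intro x h1 h2
    rw [hτinv]
    apply Equiv.swap_apply_of_ne_of_ne
    · intro h
      apply h2
      have : σ⁻¹ x = σ⁻¹ m := by rw [← ha_def]; exact h
      exact σ⁻¹.injective this
    · intro h
      apply h1
      have h3 : σ⁻¹ a = m := by
        have := congrArg (⇑σ⁻¹) hσm
        rw [σ.inv_apply_self] at this
        exact this.symm
      have : σ⁻¹ x = σ⁻¹ a := by rw [h3]; exact h
      exact σ⁻¹.injective this
  -- fixed points gain both m and a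
  have hfix : fixCt τ = fixCt σ + 2 := by
    have hset : (univ.filter fun x : Fin n => τ x = x)
        = insert m (insert a (univ.filter fun x => σ x = x)) := by
      ext x
      simp only [mem_filter, mem_univ, true_and, mem_insert]
      constructor
      · intro h
        by_cases hxm : x = m
        · exact Or.inl hxm
        · by_cases hxa : x = a
          · exact Or.inr (Or.inl hxa)
          · right; right; rwa [hτx x hxa hxm] at h
      · rintro (rfl | rfl | h)
        · exact hτm
        · exact hτa
        · have hxm : x ≠ m := by intro e; subst e; exact hm h
          have hxa : x ≠ a := by intro e; subst e; rw [hσa] at h; exact ham h.symm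
          rw [hτx x hxa hxm]; exact h
    unfold fixCt
    rw [hset, Finset.card_insert_of_notMem, Finset.card_insert_of_notMem]
    · simp only [mem_filter, mem_univ, true_and]
      intro h; rw [hσa] at h; exact ham h.symm
    · simp only [mem_insert, mem_filter, mem_univ, true_and]
      push_neg
      exact ⟨fun e => ham e.symm, hm⟩
  -- cycle peaks lose m
  have hcpk : cpeakCt σ = cpeakCt τ + 1 := by
    have s1 := card_split (fun x : Fin n => σ⁻¹ x < x ∧ σ x < x) (fun x => x = m)
    have c1 : (univ.filter fun x : Fin n => (σ⁻¹ x < x ∧ σ x < x) ∧ x = m).card = 1 := by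
      rw [card_filter_eq_pt, if_pos]
      exact ⟨by rw [← ha_def]; omega, by rw [hσm]; omega⟩
    have cmid : (univ.filter fun x : Fin n => (σ⁻¹ x < x ∧ σ x < x) ∧ ¬ x = m)
        = (univ.filter fun x : Fin n => τ⁻¹ x < x ∧ τ x < x) := by
      ext x
      simp only [mem_filter, mem_univ, true_and]
      constructor
      · rintro ⟨⟨h1, h2⟩, hxm⟩
        have hxa : x ≠ a := by intro e; subst e; rw [hσa] at h2; omega
        rw [hτix x hxa hxm, hτx x hxa hxm]
        exact ⟨h1, h2⟩
      · rintro ⟨h1, h2⟩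
        have hxm : x ≠ m := by intro e; rw [e] at h1; rw [hτim] at h1; omega
        have hxa : x ≠ a := by intro e; rw [e] at h2; rw [hτa] at h2; omega
        rw [hτix x hxa hxm] at h1
        rw [hτx x hxa hxm] at h2
        exact ⟨⟨h1, h2⟩, hxm⟩
    unfold cpeakCt
    rw [s1, c1, cmid]
    omega
  -- upper crossings lose those through the arc (a,m)
  have huc : ucP σ = ucP τ + (univ.filter fun i : Fin n => i < a ∧ a < σ i).card := by
    have s1 := card_split (fun p : Fin n × Fin n =>
      p.1 < p.2 ∧ p.2 < σ p.1 ∧ σ p.1 < σ p.2) (fun p => p.2 = a)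
    have hA1 : (univ.filter fun p : Fin n × Fin n =>
        (p.1 < p.2 ∧ p.2 < σ p.1 ∧ σ p.1 < σ p.2) ∧ p.2 = a).card
        = (univ.filter fun i : Fin n => i < a ∧ a < σ i).card := by
      rw [card_pair_snd (fun x y => x < y ∧ y < σ x ∧ σ x < σ y) a]
      congr 1
      ext x
      simp only [mem_filter, mem_univ, true_and]
      constructor
      · rintro ⟨h1, h2, _⟩; exact ⟨h1, h2⟩
      · rintro ⟨h1, h2⟩
        refine ⟨h1, h2, ?_⟩
        rw [hσa]
        have hx : σ x ≠ x := by omega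
        have h3 := (hnf x hx).2
        have h4 : σ x ≠ m := fun e => by have := hvm x e; omega
        omega
    have hrest : (univ.filter fun p : Fin n × Fin n =>
          (p.1 < p.2 ∧ p.2 < σ p.1 ∧ σ p.1 < σ p.2) ∧ ¬ p.2 = a)
        = (univ.filter fun p : Fin n × Fin n =>
          p.1 < p.2 ∧ p.2 < τ p.1 ∧ τ p.1 < τ p.2) := by
      ext ⟨x, y⟩
      simp only [mem_filter, mem_univ, true_and]
      constructor
      · rintro ⟨⟨h1, h2, h3⟩, h4⟩
        have hya : y ≠ a := h4
        have hxa : x ≠ a := by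
          intro e; rw [e] at h2 h3
          rw [hσa] at h2 h3
          have hy : σ y ≠ y := by omega
          have := (hnf y hy).2; omega
        have hxm : x ≠ m := by
          intro e; rw [e] at h1 h2
          rw [hσm] at h2
          omega
        have hym : y ≠ m := by
          intro e; rw [e] at h2 h3
          rw [hσm] at h3
          have hx : σ x ≠ x := by omega
          omega
        rw [hτx x hxa hxm, hτx y hya hym]
        exact ⟨h1, h2, h3⟩
      · rintro ⟨h1, h2, h3⟩
        have hxa : x ≠ a := by
          intro e; rw [e] at h1 h2
          rw [hτa] at h2
          omega
        have hxm : x ≠ m := by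
          intro e; rw [e] at h1 h2
          rw [hτm] at h2
          omega
        have hya : y ≠ a := by
          intro e; rw [e] at h2 h3
          rw [hτa] at h3
          omega
        have hym : y ≠ m := by
          intro e; rw [e] at h2 h3
          rw [hτm] at h3
          omega
        rw [hτx x hxa hxm] at h2 h3
        rw [hτx y hya hym] at h3
        exact ⟨⟨h1, h2, h3⟩, hya⟩
    unfold ucP
    rw [s1, hA1, hrest]
    omega
  -- lower crossings lose those through the arc (m,a)
  have hlc : lcP σ = lcP τ + (univ.filter fun k : Fin n => σ k < a ∧ a < k).card := by
    have s1 := card_split (fun p : Fin n × Fin n =>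
      σ p.1 < σ p.2 ∧ σ p.2 < p.1 ∧ p.1 < p.2) (fun p => p.2 = m)
    have hL1 : (univ.filter fun p : Fin n × Fin n =>
        (σ p.1 < σ p.2 ∧ σ p.2 < p.1 ∧ p.1 < p.2) ∧ p.2 = m).card
        = (univ.filter fun k : Fin n => σ k < a ∧ a < k).card := by
      rw [card_pair_snd (fun x y => σ x < σ y ∧ σ y < x ∧ x < y) m]
      congr 1
      ext k
      simp only [mem_filter, mem_univ, true_and]
      rw [hσm]
      constructor
      · rintro ⟨h1, h2, _⟩; exact ⟨h1, h2⟩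
      · rintro ⟨h1, h2⟩
        have hk : σ k ≠ k := by omega
        have h3 := (hnf k hk).1
        have hkm : k ≠ m := by intro e; rw [e] at h1; rw [hσm] at h1; omega
        exact ⟨h1, h2, by omega⟩
    have hLrest : (univ.filter fun p : Fin n × Fin n =>
          (σ p.1 < σ p.2 ∧ σ p.2 < p.1 ∧ p.1 < p.2) ∧ ¬ p.2 = m)
        = (univ.filter fun p : Fin n × Fin n =>
          τ p.1 < τ p.2 ∧ τ p.2 < p.1 ∧ p.1 < p.2) := by
      ext ⟨x, y⟩
      simp only [mem_filter, mem_univ, true_and]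
      constructor
      · rintro ⟨⟨h1, h2, h3⟩, h4⟩
        have hy_nf : σ y ≠ y := by omega
        have hyb := (hnf y hy_nf).2
        have hyle := (hnf y hy_nf).1
        have hym : y ≠ m := h4
        have hxm : x ≠ m := by intro e; rw [e] at h3; omega
        have hxa : x ≠ a := by
          intro e; rw [e] at h1 h2
          rw [hσa] at h1
          omega
        have hya : y ≠ a := by
          intro e; rw [e] at h2 h3
          rw [hσa] at h2
          omega
        rw [hτx x hxa hxm, hτx y hya hym]
        exact ⟨h1, h2, h3⟩
      · rintro ⟨h1, h2, h3⟩
        have hxm : x ≠ m := by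
          intro e; rw [e] at h1 h2
          rw [hτm] at h1
          omega
        have hym : y ≠ m := by
          intro e; rw [e] at h1 h2
          rw [hτm] at h1 h2
          omega
        have hxa : x ≠ a := by
          intro e; rw [e] at h1 h2
          rw [hτa] at h1
          omega
        have hya : y ≠ a := by
          intro e; rw [e] at h1 h2
          rw [hτa] at h1 h2
          omega
        rw [hτx x hxa hxm] at h1
        rw [hτx y hya hym] at h1 h2
        exact ⟨⟨h1, h2, h3⟩, hym⟩
    unfold lcP
    rw [s1, hL1, hLrest]
    omega
  -- the two lost crossing sets have the same size
  have hSU : (univ.filter fun i : Fin n => i < a ∧ a < σ i).card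
      = (univ.filter fun k : Fin n => σ k < a ∧ a < k).card := by
    have hbal := balance σ a
    have l1 := card_split (fun x : Fin n => x ≤ a ∧ a < σ x) (fun x => x = a)
    have e1 : (univ.filter fun x : Fin n => (x ≤ a ∧ a < σ x) ∧ x = a).card = 1 := by
      rw [card_filter_eq_pt, if_pos]
      exact ⟨le_refl _, by rw [hσa]; omega⟩
    have e2 : (univ.filter fun x : Fin n => (x ≤ a ∧ a < σ x) ∧ ¬ x = a)
        = (univ.filter fun i : Fin n => i < a ∧ a < σ i) := by
      ext x
      simp only [mem_filter, mem_univ, true_and]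
      constructor
      · rintro ⟨⟨h1, h2⟩, h3⟩; exact ⟨by omega, h2⟩
      · rintro ⟨h1, h2⟩; exact ⟨⟨by omega, h2⟩, by omega⟩
    have r1 := card_split (fun x : Fin n => a < x ∧ σ x ≤ a) (fun x => σ x < a)
    have f1 : (univ.filter fun x : Fin n => (a < x ∧ σ x ≤ a) ∧ σ x < a)
        = (univ.filter fun k : Fin n => σ k < a ∧ a < k) := by
      ext x
      simp only [mem_filter, mem_univ, true_and]
      constructor
      · rintro ⟨⟨h1, h2⟩, h3⟩; exact ⟨h3, h1⟩
      · rintro ⟨h1, h2⟩; exact ⟨⟨h2, by omega⟩, h1⟩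
    have f2 : (univ.filter fun x : Fin n => (a < x ∧ σ x ≤ a) ∧ ¬ σ x < a).card = 1 := by
      have hset : (univ.filter fun x : Fin n => (a < x ∧ σ x ≤ a) ∧ ¬ σ x < a) = {m} := by
        ext x
        simp only [mem_filter, mem_univ, true_and, mem_singleton]
        constructor
        · rintro ⟨⟨h1, h2⟩, h3⟩
          have : σ x = a := by omega
          exact hva x this
        · intro e
          rw [e, hσm]
          exact ⟨⟨ha_lt, le_refl _⟩, by omega⟩
      rw [hset, Finset.card_singleton]
    rw [e1, e2] at l1
    rw [f1, f2] at r1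
    omega
  omega
lemma ucP_inv (σ : Equiv.Perm (Fin n)) : ucP σ⁻¹ = lcP σ := by
  unfold ucP lcP
  apply Finset.card_nbij' (fun q => (σ⁻¹ q.1, σ⁻¹ q.2)) (fun q => (σ q.1, σ q.2))
  · rintro ⟨u,v⟩ hq
    simp only [Finset.mem_coe, mem_filter, mem_univ, true_and, Equiv.Perm.apply_inv_self] at hq ⊢
    exact ⟨hq.1, hq.2.1, hq.2.2⟩
  · rintro ⟨k,l⟩ hq
    simp only [Finset.mem_coe, mem_filter, mem_univ, true_and, Equiv.Perm.inv_apply_self] at hq ⊢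
    exact ⟨hq.1, hq.2.1, hq.2.2⟩
  · rintro ⟨u,v⟩ _; simp
  · rintro ⟨k,l⟩ _; simp

lemma lcP_inv (σ : Equiv.Perm (Fin n)) : lcP σ⁻¹ = ucP σ := by
  have := ucP_inv σ⁻¹
  simp only [inv_inv] at this
  omega

lemma fixCt_inv (σ : Equiv.Perm (Fin n)) : fixCt σ⁻¹ = fixCt σ := by
  unfold fixCt
  congr 1
  ext x
  simp only [mem_filter, mem_univ, true_and]
  constructor
  · intro h; nth_rewrite 1 [← h]; simp
  · intro h; nth_rewrite 1 [← h]; simp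

lemma cpeakCt_inv (σ : Equiv.Perm (Fin n)) : cpeakCt σ⁻¹ = cpeakCt σ := by
  unfold cpeakCt
  congr 1
  ext x
  simp only [mem_filter, mem_univ, true_and, inv_inv]
  tauto

lemma step (σ : Equiv.Perm (Fin n)) (m : Fin n) (hm : σ m ≠ m)
    (hmax : ∀ x, σ x ≠ x → x ≤ m) :
    (fixCt (σ * Equiv.swap (σ⁻¹ m) m) + cpeakCt (σ * Equiv.swap (σ⁻¹ m) m)
       + ucP (σ * Equiv.swap (σ⁻¹ m) m) + lcP (σ * Equiv.swap (σ⁻¹ m) m)) % 2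
    = (1 + fixCt σ + cpeakCt σ + ucP σ + lcP σ) % 2 := by
  rcases lt_trichotomy (σ⁻¹ m) (σ m) with h | h | h
  · exact stepCore σ m hm hmax h
  · exact stepEq σ m hm hmax h
  · have hm' : σ⁻¹ m ≠ m := by
      intro e
      apply hm
      have := congrArg (⇑σ) e
      rw [σ.apply_inv_self] at this
      exact this.symm
    have hmax' : ∀ x, σ⁻¹ x ≠ x → x ≤ m := by
      intro x hx
      apply hmax
      intro e
      apply hx
      nth_rewrite 1 [← e]
      exact σ.inv_apply_self x
    have h' : (σ⁻¹)⁻¹ m < σ⁻¹ m := by rw [inv_inv]; exact h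
    have key := stepCore σ⁻¹ m hm' hmax' h'
    have hid : σ⁻¹ * Equiv.swap ((σ⁻¹)⁻¹ m) m = (σ * Equiv.swap (σ⁻¹ m) m)⁻¹ := by
      rw [inv_inv, Equiv.mul_swap_eq_swap_mul, Equiv.Perm.inv_apply_self, mul_inv_rev,
        Equiv.swap_inv, Equiv.swap_comm]
    rw [hid, fixCt_inv, cpeakCt_inv, ucP_inv, lcP_inv, fixCt_inv, cpeakCt_inv, ucP_inv, lcP_inv]
      at key
    omega

lemma pow_neg_one_congr {x y : ℕ} (h : x % 2 = y % 2) :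
    ((-1 : ℤˣ)) ^ x = (-1) ^ y := by
  conv_lhs => rw [← Nat.div_add_mod x 2]
  conv_rhs => rw [← Nat.div_add_mod y 2]
  rw [pow_add, pow_add, pow_mul, pow_mul, h]
  norm_num

lemma pow_neg_one_inj {x y : ℕ} (h : ((-1 : ℤˣ)) ^ x = (-1) ^ y) : x % 2 = y % 2 := by
  have hx : ((-1 : ℤˣ)) ^ x = (-1) ^ (x % 2) := pow_neg_one_congr (by omega)
  have hy : ((-1 : ℤˣ)) ^ y = (-1) ^ (y % 2) := pow_neg_one_congr (by omega)
  rw [hx, hy] at h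
  rcases Nat.mod_two_eq_zero_or_one x with h1 | h1 <;>
    rcases Nat.mod_two_eq_zero_or_one y with h2 | h2 <;>
    rw [h1, h2] at h ⊢ <;> exact absurd h (by decide)

set_option maxHeartbeats 1000000 in
lemma signFormula (σ : Equiv.Perm (Fin n)) :
    Equiv.Perm.sign σ = (-1 : ℤˣ) ^ (n + fixCt σ + cpeakCt σ + ucP σ + lcP σ) := by
  generalize hk : (univ.filter fun x : Fin n => σ x ≠ x).card = k
  induction k using Nat.strong_induction_on generalizing σ with
  | _ k ih =>
  by_cases h0 : ∀ x, σ x = x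
  · have hσ : σ = 1 := Equiv.ext h0
    subst hσ
    have hfix : fixCt (1 : Equiv.Perm (Fin n)) = n := by
      unfold fixCt
      simp
    have hcpk : cpeakCt (1 : Equiv.Perm (Fin n)) = 0 := by
      unfold cpeakCt
      rw [Finset.card_eq_zero]
      ext x
      simp only [mem_filter, mem_univ, true_and, notMem_empty, iff_false]
      rintro ⟨h1, _⟩
      simp at h1
    have huc : ucP (1 : Equiv.Perm (Fin n)) = 0 := by
      unfold ucP
      rw [Finset.card_eq_zero]
      ext p
      simp only [mem_filter, mem_univ, true_and, notMem_empty, iff_false]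
      rintro ⟨h1, h2, _⟩
      simp only [Equiv.Perm.one_apply] at h2
      omega
    have hlc : lcP (1 : Equiv.Perm (Fin n)) = 0 := by
      unfold lcP
      rw [Finset.card_eq_zero]
      ext p
      simp only [mem_filter, mem_univ, true_and, notMem_empty, iff_false]
      rintro ⟨h1, h2, h3⟩
      simp only [Equiv.Perm.one_apply] at h1 h2
      omega
    rw [hfix, hcpk, huc, hlc, Equiv.Perm.sign_one]
    have h00 : ((-1 : ℤˣ)) ^ (n + n + 0 + 0 + 0) = (-1) ^ (0 : ℕ) :=
      pow_neg_one_congr (by omega)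
    rw [h00, pow_zero]
  · push_neg at h0
    have hne : (univ.filter fun x : Fin n => σ x ≠ x).Nonempty := by
      obtain ⟨x, hx⟩ := h0
      exact ⟨x, by simp [hx]⟩
    set m := (univ.filter fun x : Fin n => σ x ≠ x).max' hne with hm_def
    have hm : σ m ≠ m := by
      have := (univ.filter fun x : Fin n => σ x ≠ x).max'_mem hne
      rw [← hm_def] at this
      simpa using this
    have hmax : ∀ x, σ x ≠ x → x ≤ m := by
      intro x hx
      apply Finset.le_max'
      simp [hx]
    set τ := σ * Equiv.swap (σ⁻¹ m) m with hτ_def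
    have ham : σ⁻¹ m ≠ m := by
      intro e
      apply hm
      have := congrArg (⇑σ) e
      rw [σ.apply_inv_self] at this
      exact this.symm
    have hτm : τ m = m := by
      rw [hτ_def]
      simp only [Equiv.Perm.mul_apply, Equiv.swap_apply_right]
      exact σ.apply_inv_self m
    have hτval : ∀ x, x ≠ σ⁻¹ m → x ≠ m → τ x = σ x := by
      intro x h1 h2
      rw [hτ_def]
      simp only [Equiv.Perm.mul_apply, Equiv.swap_apply_of_ne_of_ne h1 h2]
    have hsub : (univ.filter fun x : Fin n => τ x ≠ x)
        ⊂ (univ.filter fun x : Fin n => σ x ≠ x) := by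
      constructor
      · intro x hx
        simp only [mem_filter, mem_univ, true_and] at hx ⊢
        by_cases h2 : x = m
        · subst h2; exact absurd hτm hx
        · by_cases h1 : x = σ⁻¹ m
          · subst h1
            intro e
            apply hm
            have := congrArg (⇑σ) e
            rwa [σ.apply_inv_self] at this
          · rw [hτval x h1 h2] at hx
            exact hx
      · intro hall
        have := hall (by simp [hm] : m ∈ _)
        simp only [mem_filter, mem_univ, true_and] at this
        exact this hτm
    have hlt : (univ.filter fun x : Fin n => τ x ≠ x).card < k := by
      rw [← hk]
      exact Finset.card_lt_card hsub
    have ihτ := ih _ hlt τ rfl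
    have hstep := step σ m hm hmax
    rw [← hτ_def] at hstep
    have hτσ : τ * Equiv.swap (σ⁻¹ m) m = σ := by
      rw [hτ_def, mul_assoc, Equiv.swap_mul_self, mul_one]
    have hsign : Equiv.Perm.sign σ = - Equiv.Perm.sign τ := by
      rw [← hτσ]
      rw [Equiv.Perm.sign_mul, Equiv.Perm.sign_swap ham, mul_neg_one]
    rw [hsign, ihτ]
    have : ((-1 : ℤˣ)) ^ (n + fixCt τ + cpeakCt τ + ucP τ + lcP τ + 1)
        = (-1) ^ (n + fixCt σ + cpeakCt σ + ucP σ + lcP σ) := by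
      apply pow_neg_one_congr
      omega
    rw [← this, pow_succ, mul_neg_one]

lemma ucross_eq_ucP (σ : Equiv.Perm (Fin n)) : ucrossCt σ = ucP σ := by
  unfold ucrossCt ucP
  apply Finset.card_nbij' (fun p => (p.1, p.2.1)) (fun q => (q.1, q.2, σ q.1, σ q.2))
  · rintro ⟨i,j,k,l⟩ hp
    simp only [Finset.mem_coe, mem_filter, mem_univ, true_and] at hp ⊢
    obtain ⟨h1,h2,h3,h4,h5⟩ := hp
    subst h4; subst h5
    exact ⟨h1, h2, h3⟩
  · rintro ⟨i,j⟩ hq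
    simp only [Finset.mem_coe, mem_filter, mem_univ, true_and, and_true] at hq ⊢
    exact ⟨hq.1, hq.2.1, hq.2.2⟩
  · rintro ⟨i,j,k,l⟩ hp
    simp only [Finset.mem_coe, mem_filter, mem_univ, true_and] at hp
    obtain ⟨h1,h2,h3,h4,h5⟩ := hp
    simp [h4, h5]
  · rintro ⟨i,j⟩ hq; rfl

lemma lcross_eq_lcP (σ : Equiv.Perm (Fin n)) : lcrossCt σ = lcP σ := by
  unfold lcrossCt lcP
  apply Finset.card_nbij' (fun p => (p.2.2.1, p.2.2.2)) (fun q => (σ q.1, σ q.2, q.1, q.2))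
  · rintro ⟨i,j,k,l⟩ hp
    simp only [Finset.mem_coe, mem_filter, mem_univ, true_and] at hp ⊢
    obtain ⟨h1,h2,h3,h4,h5⟩ := hp
    subst h4; subst h5
    exact ⟨h1, h2, h3⟩
  · rintro ⟨k,l⟩ hq
    simp only [Finset.mem_coe, mem_filter, mem_univ, true_and, and_true] at hq ⊢
    exact ⟨hq.1, hq.2.1, hq.2.2⟩
  · rintro ⟨i,j,k,l⟩ hp
    simp only [Finset.mem_coe, mem_filter, mem_univ, true_and] at hp
    obtain ⟨h1,h2,h3,h4,h5⟩ := hp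
    simp [h4, h5]
  · rintro ⟨k,l⟩ hq; rfl

end Aux

theorem cyc_mod_two_eq_fix_add_cpeak_add_cross {n : ℕ} (σ : Equiv.Perm (Fin n)) :
    cycCt σ % 2 = (fixCt σ + cpeakCt σ + ucrossCt σ + lcrossCt σ) % 2 := by
  classical
  have h2 := signFormula σ
  have hsupp : σ.support.card + fixCt σ = n := by
    have hsplit := Finset.card_filter_add_card_filter_not
      (s := (univ : Finset (Fin n))) (p := fun x => σ x = x)
    have hsupp_eq : σ.support = univ.filter fun x => ¬ σ x = x := by
      ext x
      simp [Equiv.Perm.mem_support]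
    rw [hsupp_eq]
    unfold fixCt
    rw [Finset.card_univ, Fintype.card_fin] at hsplit
    omega
  have h1 : Equiv.Perm.sign σ = (-1 : ℤˣ) ^ (n + cycCt σ) := by
    rw [Equiv.Perm.sign_of_cycleType]
    apply pow_neg_one_congr
    have hsum : σ.cycleType.sum = σ.support.card := Equiv.Perm.sum_cycleType σ
    unfold cycCt
    omega
  have hpar := pow_neg_one_inj (h1.symm.trans h2)
  rw [ucross_eq_ucP, lcross_eq_lcP]
  omega
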